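/- For every multi-index α ∈ ℕ^D, the higher-order derivatives of the PQC cost function are uniformly bounded by the operator norm of the observable: sup_{θ ∈ ℝ^D} |D^α C(θ)| ≤ ‖H‖. -/

import Mathlib

set_option maxRecDepth 4000


open Matrix Real

/-- The partial derivative `∂_{θ_k} f`. -/
noncomputable def partialDeriv {D : ℕ} (k : Fin D) (f : (Fin D → ℝ) → ℝ) :
    (Fin D → ℝ) → ℝ :=
  fun θ => fderiv ℝ f θ (Pi.single k 1)

/-- The higher-order partial derivative `D^α = ∂_{θ_1}^{α_1} ⋯ ∂_{θ_D}^{α_D}`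
associated with a multi-index `α ∈ ℕ^D`. -/
noncomputable def multiDeriv {D : ℕ} (α : Fin D → ℕ) (f : (Fin D → ℝ) → ℝ) :
    (Fin D → ℝ) → ℝ :=
  ((List.finRange D).flatMap (fun k => List.replicate (α k) k)).foldr partialDeriv f

/- ### Auxiliary lemmas -/

lemma exp_invo {A : Type*} [NormedRing A] [NormedAlgebra ℂ A] [CompleteSpace A]
    (V : A) (hV : V * V = 1) (z : ℂ) :
    NormedSpace.exp (z • V) = Complex.cosh z • (1 : A) + Complex.sinh z • V := by
  rw [NormedSpace.exp_eq_tsum ℂ]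
  refine HasSum.tsum_eq ?_
  refine HasSum.even_add_odd ?_ ?_
  · have h := (Complex.hasSum_cosh z).smul_const (1 : A)
    convert h using 2 with k
    have hVe : V ^ (2 * k) = 1 := by rw [pow_mul, pow_two, hV, one_pow]
    rw [smul_pow, hVe, smul_smul]
    congr 1
    field_simp
  · have h := (Complex.hasSum_sinh z).smul_const V
    convert h using 2 with k
    have hVpow : V ^ (2 * k + 1) = V := by
      rw [pow_succ, pow_mul, pow_two, hV, one_pow, one_mul]
    rw [smul_pow, hVpow, smul_smul]
    congr 1
    field_simp

lemma matrix_exp_invo {m : Type*} [Fintype m] [DecidableEq m]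
    (V : Matrix m m ℂ) (hV : V * V = 1) (t : ℝ) :
    NormedSpace.exp ((-Complex.I * ((t : ℂ) / 2)) • V)
      = (Real.cos (t / 2) : ℂ) • (1 : Matrix m m ℂ)
        + (-Complex.I * (Real.sin (t / 2) : ℂ)) • V := by
  letI : SeminormedRing (Matrix m m ℂ) := Matrix.linftyOpSemiNormedRing
  letI : NormedRing (Matrix m m ℂ) := Matrix.linftyOpNormedRing
  letI : NormedAlgebra ℂ (Matrix m m ℂ) := Matrix.linftyOpNormedAlgebra
  erw [exp_invo V hV]
  have h1 : Complex.cosh (-Complex.I * ((t : ℂ) / 2)) = (Real.cos (t / 2) : ℂ) := by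
    rw [show -Complex.I * ((t : ℂ) / 2) = -(((t : ℝ) / 2 : ℂ) * Complex.I) by push_cast; ring,
      Complex.cosh_neg, Complex.cosh_mul_I, Complex.ofReal_cos]
    norm_num
  have h2 : Complex.sinh (-Complex.I * ((t : ℂ) / 2)) = -Complex.I * (Real.sin (t / 2) : ℂ) := by
    rw [show -Complex.I * ((t : ℂ) / 2) = -(((t : ℝ) / 2 : ℂ) * Complex.I) by push_cast; ring,
      Complex.sinh_neg, Complex.sinh_mul_I, Complex.ofReal_sin]
    push_cast
    ring
  rw [h1, h2]

lemma factor_unitary {m : Type*} [Fintype m] [DecidableEq m]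
    (V W : Matrix m m ℂ) (hV : Vᴴ = V) (hW : Wᴴ * W = 1) (z : ℂ) (hz : starRingEnd ℂ z = -z) :
    (NormedSpace.exp (z • V) * W)ᴴ * (NormedSpace.exp (z • V) * W) = 1 := by
  have hstar : (z • V)ᴴ = -(z • V) := by
    rw [Matrix.conjTranspose_smul, hV, ← starRingEnd_apply, hz, neg_smul]
  have h1 : (NormedSpace.exp (z • V))ᴴ * NormedSpace.exp (z • V) = 1 := by
    rw [← Matrix.exp_conjTranspose, hstar,
      ← Matrix.exp_add_of_commute (-(z • V)) (z • V) ((Commute.refl _).neg_left),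
      neg_add_cancel, NormedSpace.exp_zero]
  calc (NormedSpace.exp (z • V) * W)ᴴ * (NormedSpace.exp (z • V) * W)
      = Wᴴ * (((NormedSpace.exp (z • V))ᴴ * NormedSpace.exp (z • V)) * W) := by
        rw [Matrix.conjTranspose_mul]; noncomm_ring
    _ = 1 := by rw [h1, one_mul, hW]

lemma prod_unitary {m ι : Type*} [Fintype m] [DecidableEq m]
    (l : List ι) (g : ι → Matrix m m ℂ) (hg : ∀ i ∈ l, (g i)ᴴ * g i = 1) :
    ((l.map g).prod)ᴴ * (l.map g).prod = 1 := by
  induction l with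
  | nil => simp
  | cons a l ih =>
    have ha := hg a List.mem_cons_self
    have ih' := ih fun i hi => hg i (List.mem_cons_of_mem a hi)
    simp only [List.map_cons, List.prod_cons, Matrix.conjTranspose_mul]
    calc ((l.map g).prod)ᴴ * (g a)ᴴ * (g a * (l.map g).prod)
        = ((l.map g).prod)ᴴ * (((g a)ᴴ * g a) * (l.map g).prod) := by noncomm_ring
      _ = 1 := by rw [ha, one_mul, ih']

lemma dot_bound {m : Type*} [Fintype m] [DecidableEq m]
    (H : Matrix m m ℂ) (ψ : m → ℂ) (hψ : star ψ ⬝ᵥ ψ = 1) (r : ℝ)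
    (hr : (r : ℂ) = star ψ ⬝ᵥ (H *ᵥ ψ)) :
    |r| ≤ ‖Matrix.toEuclideanCLM (𝕜 := ℂ) H‖ := by
  set x : EuclideanSpace ℂ m := (WithLp.equiv 2 _).symm ψ with hx
  have hinner : (inner ℂ x x : ℂ) = 1 := by
    rw [EuclideanSpace.inner_eq_star_dotProduct, dotProduct_comm]; exact hψ
  have hnorm : ‖x‖ = 1 := by
    have h2 : ‖x‖ ^ 2 = 1 := by
      have h1 := inner_self_eq_norm_sq (𝕜 := ℂ) x
      rw [hinner] at h1
      simpa using h1.symm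
    nlinarith [norm_nonneg x]
  have happ : Matrix.toEuclideanCLM (𝕜 := ℂ) H x = (WithLp.equiv 2 _).symm (H *ᵥ ψ) := by
    rfl
  have hinner2 : (r : ℂ) = inner ℂ x (Matrix.toEuclideanCLM (𝕜 := ℂ) H x) := by
    rw [happ, EuclideanSpace.inner_eq_star_dotProduct, dotProduct_comm, hr]; rfl
  calc |r| = ‖(r : ℂ)‖ := by rw [Complex.norm_real, Real.norm_eq_abs]
    _ = ‖(inner ℂ x (Matrix.toEuclideanCLM (𝕜 := ℂ) H x) : ℂ)‖ := by rw [hinner2]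
    _ ≤ ‖x‖ * ‖Matrix.toEuclideanCLM (𝕜 := ℂ) H x‖ := norm_inner_le_norm _ _
    _ ≤ ‖x‖ * (‖Matrix.toEuclideanCLM (𝕜 := ℂ) H‖ * ‖x‖) := by
        gcongr; exact (Matrix.toEuclideanCLM (𝕜 := ℂ) H).le_opNorm x
    _ = ‖Matrix.toEuclideanCLM (𝕜 := ℂ) H‖ := by rw [hnorm]; ring

/- ### A class of functions closed under partial derivatives -/

def Nice {D : ℕ} (B : ℝ) (f : (Fin D → ℝ) → ℝ) : Prop :=
  (∀ θ, |f θ| ≤ B) ∧ Differentiable ℝ f ∧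
    ∀ (k : Fin D) (θ : Fin D → ℝ), ∃ a b c : ℝ,
      ∀ t : ℝ, f (Function.update θ k t) = c + a * Real.cos t + b * Real.sin t

lemma nice_shift {D : ℕ} {B : ℝ} {f : (Fin D → ℝ) → ℝ} (hf : Nice B f) (v : Fin D → ℝ) :
    Nice B (fun θ => f (θ + v)) := by
  obtain ⟨hb, hd, ht⟩ := hf
  refine ⟨fun θ => hb _, hd.comp (differentiable_id.add_const v), fun k θ => ?_⟩
  obtain ⟨a, b, c, h⟩ := ht k (θ + v)
  refine ⟨a * Real.cos (v k) + b * Real.sin (v k), b * Real.cos (v k) - a * Real.sin (v k),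
    c, fun t => ?_⟩
  have hup : Function.update θ k t + v = Function.update (θ + v) k (t + v k) := by
    funext j
    by_cases hj : j = k
    · subst hj; simp
    · simp [Function.update_apply, hj]
  simp only [hup, h (t + v k), Real.cos_add, Real.sin_add]
  ring

lemma nice_sub_half {D : ℕ} {B : ℝ} {f g : (Fin D → ℝ) → ℝ}
    (hf : Nice B f) (hg : Nice B g) : Nice B (fun θ => (f θ - g θ) / 2) := by
  obtain ⟨hb, hd, ht⟩ := hf
  obtain ⟨hb', hd', ht'⟩ := hg
  refine ⟨fun θ => ?_, by
    have := (hd.sub hd').const_smul ((2:ℝ)⁻¹)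
    simpa [Pi.smul_def, smul_eq_mul, div_eq_inv_mul, mul_comm] using this, fun k θ => ?_⟩
  · have h1 := hb θ; have h2 := hb' θ
    have hB : 0 ≤ B := le_trans (abs_nonneg _) h1
    rw [abs_div, abs_two]
    have : |f θ - g θ| ≤ 2 * B := by
      calc |f θ - g θ| ≤ |f θ| + |g θ| := abs_sub _ _
        _ ≤ 2 * B := by linarith
    linarith [this]
  · obtain ⟨a, b, c, h⟩ := ht k θ
    obtain ⟨a', b', c', h'⟩ := ht' k θ
    exact ⟨(a - a') / 2, (b - b') / 2, (c - c') / 2, fun t => by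
      show (f (Function.update θ k t) - g (Function.update θ k t)) / 2 = _
      rw [h t, h' t]; ring⟩

lemma partialDeriv_eq {D : ℕ} {B : ℝ} {f : (Fin D → ℝ) → ℝ} (hf : Nice B f) (k : Fin D) :
    partialDeriv k f = fun θ =>
      (f (θ + (π / 2) • (Pi.single k 1 : Fin D → ℝ))
        - f (θ + (-(π / 2)) • (Pi.single k 1 : Fin D → ℝ))) / 2 := by
  funext θ
  obtain ⟨a, b, c, h⟩ := hf.2.2 k θ
  set e : Fin D → ℝ := Pi.single k 1 with he
  have hm : ∀ t : ℝ, θ + (t - θ k) • e = Function.update θ k t := by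
    intro t
    funext j
    by_cases hj : j = k
    · subst hj; simp [he]
    · simp [he, Function.update_apply, hj, Pi.single_apply]
  have hline : HasDerivAt (fun t : ℝ => θ + (t - θ k) • e) e (θ k) := by
    have h1 : HasDerivAt (fun t : ℝ => (t - θ k) • e) ((1 : ℝ) • e) (θ k) :=
      ((hasDerivAt_id (θ k)).sub_const (θ k)).smul_const e
    simpa using h1.const_add θ
  have hpt : θ + (θ k - θ k) • e = θ := by simp
  have hF : HasFDerivAt f (fderiv ℝ f θ) (θ + (θ k - θ k) • e) := by
    rw [hpt]; exact (hf.2.1 θ).hasFDerivAt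
  have hcomp : HasDerivAt (fun t : ℝ => f (θ + (t - θ k) • e)) (fderiv ℝ f θ e) (θ k) :=
    hF.comp_hasDerivAt (θ k) hline
  have hg : (fun t : ℝ => f (θ + (t - θ k) • e)) =
      fun t => c + a * Real.cos t + b * Real.sin t := by
    funext t; rw [hm t, h t]
  rw [hg] at hcomp
  have htrig : HasDerivAt (fun t => c + a * Real.cos t + b * Real.sin t)
      (a * (-Real.sin (θ k)) + b * Real.cos (θ k)) (θ k) := by
    exact (((Real.hasDerivAt_cos (θ k)).const_mul a).const_add c).add
      ((Real.hasDerivAt_sin (θ k)).const_mul b)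
  have huniq : fderiv ℝ f θ e = a * (-Real.sin (θ k)) + b * Real.cos (θ k) :=
    hcomp.unique htrig
  have h1 : θ + (π / 2) • e = Function.update θ k (θ k + π / 2) := by
    rw [← hm]; norm_num
  have h2 : θ + (-(π / 2)) • e = Function.update θ k (θ k - π / 2) := by
    rw [← hm]; norm_num
  show fderiv ℝ f θ (Pi.single k 1) = _
  rw [← he, huniq, h1, h2, h, h]
  simp [Real.cos_add, Real.sin_add, Real.cos_sub, Real.sin_sub]
  ring

lemma nice_partialDeriv {D : ℕ} {B : ℝ} {f : (Fin D → ℝ) → ℝ} (hf : Nice B f) (k : Fin D) :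
    Nice B (partialDeriv k f) := by
  rw [partialDeriv_eq hf k]
  exact nice_sub_half (nice_shift hf ((π / 2) • (Pi.single k 1 : Fin D → ℝ)))
    (nice_shift hf ((-(π / 2)) • (Pi.single k 1 : Fin D → ℝ)))

lemma nice_foldr {D : ℕ} {B : ℝ} {f : (Fin D → ℝ) → ℝ} (hf : Nice B f) (l : List (Fin D)) :
    Nice B (l.foldr partialDeriv f) := by
  induction l with
  | nil => exact hf
  | cons a l ih => exact nice_partialDeriv ih a

/-- For every multi-index `α ∈ ℕ^D`, the higher-order derivatives of the
PQC cost function are uniformly bounded by the operator norm of the observable `H`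
(viewed as an operator on the Euclidean space `ℂ^{2^N}`):
`sup_{θ ∈ ℝ^D} |D^α C(θ)| ≤ ‖H‖`. -/
theorem stmt3 (N D : ℕ) (hN : 1 ≤ N) (hD : 1 ≤ D)
    (W V : Fin D → Matrix (Fin (2 ^ N)) (Fin (2 ^ N)) ℂ)
    (hW : ∀ k, (W k)ᴴ * W k = 1 ∧ W k * (W k)ᴴ = 1)
    (hVherm : ∀ k, (V k)ᴴ = V k) (hVinv : ∀ k, V k * V k = 1)
    (H : Matrix (Fin (2 ^ N)) (Fin (2 ^ N)) ℂ) (hH : Hᴴ = H)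
    (e₀ : Fin (2 ^ N) → ℂ) (he₀ : e₀ = fun i : Fin (2 ^ N) => if (i : ℕ) = 0 then (1 : ℂ) else 0)
    (U : (Fin D → ℝ) → Matrix (Fin (2 ^ N)) (Fin (2 ^ N)) ℂ)
    (hU : ∀ θ, U θ = ((List.finRange D).reverse.map
        (fun k => NormedSpace.exp ((-Complex.I * ((θ k : ℂ) / 2)) • V k) * W k)).prod)
    (C : (Fin D → ℝ) → ℝ)
    (hC : ∀ θ, (C θ : ℂ) = star (U θ *ᵥ e₀) ⬝ᵥ (H *ᵥ (U θ *ᵥ e₀)))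
    (α : Fin D → ℕ) (θ : Fin D → ℝ) :
    |multiDeriv α C θ| ≤ ‖Matrix.toEuclideanCLM (𝕜 := ℂ) H‖ := by
  classical
  set g : (Fin D → ℝ) → Fin D → Matrix (Fin (2 ^ N)) (Fin (2 ^ N)) ℂ :=
    fun θ k => NormedSpace.exp ((-Complex.I * ((θ k : ℂ) / 2)) • V k) * W k with hg
  -- unitarity of U
  have hUU : ∀ θ, (U θ)ᴴ * U θ = 1 := by
    intro θ
    rw [hU θ]
    refine prod_unitary _ _ fun i _ => ?_
    refine factor_unitary (V i) (W i) (hVherm i) (hW i).1 _ ?_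
    simp [_root_.map_mul, map_div₀, Complex.conj_I, Complex.conj_ofReal, map_ofNat]
  -- the state is normalized
  have hψ1 : ∀ θ, star (U θ *ᵥ e₀) ⬝ᵥ (U θ *ᵥ e₀) = 1 := by
    intro θ
    rw [Matrix.star_mulVec, Matrix.dotProduct_mulVec, Matrix.vecMul_vecMul, hUU θ,
      Matrix.vecMul_one]
    have hpos : 0 < 2 ^ N := pow_pos (by norm_num) N
    have hterm : ∀ i : Fin (2 ^ N), star (e₀ i) * e₀ i = if (i : ℕ) = 0 then (1:ℂ) else 0 := by
      intro i
      by_cases h : (i : ℕ) = 0 <;> simp only [Fin.val_eq_zero_iff] at h <;> simp [he₀, h]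
    calc star e₀ ⬝ᵥ e₀ = ∑ i, star (e₀ i) * e₀ i := rfl
      _ = ∑ i : Fin (2 ^ N), if (i : ℕ) = 0 then (1:ℂ) else 0 := by simp_rw [hterm]
      _ = 1 := by
          rw [Finset.sum_eq_single (⟨0, hpos⟩ : Fin (2 ^ N))]
          · simp
          · intro b _ hb
            have hb' : (b : ℕ) ≠ 0 := fun h => hb (Fin.ext h)
            simp [hb']
          · intro h
            exact absurd (Finset.mem_univ _) h
  -- boundedness
  have hbound : ∀ θ, |C θ| ≤ ‖Matrix.toEuclideanCLM (𝕜 := ℂ) H‖ := fun θ =>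
    dot_bound H (U θ *ᵥ e₀) (hψ1 θ) (C θ) (hC θ)
  -- differentiability
  have hproj : ∀ a : Fin D, Differentiable ℝ (fun θ : Fin D → ℝ => θ a) := fun a =>
    (ContinuousLinearMap.proj a : (Fin D → ℝ) →L[ℝ] ℝ).differentiable
  have hfac : ∀ (a : Fin D) (p q : Fin (2 ^ N)),
      Differentiable ℝ (fun θ : Fin D → ℝ => (g θ a) p q) := by
    intro a p q
    have heq : (fun θ : Fin D → ℝ => (g θ a) p q) = fun θ =>
        (Real.cos (θ a / 2) : ℂ) * (W a) p q
          + (-Complex.I * (Real.sin (θ a / 2) : ℂ)) * ((V a) * (W a)) p q := by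
      funext θ
      rw [hg]
      simp only []
      rw [matrix_exp_invo (V a) (hVinv a) (θ a)]
      simp [Matrix.add_mul, Matrix.smul_mul, Matrix.add_apply, Matrix.smul_apply, smul_eq_mul]
    rw [heq]
    have hhalf : Differentiable ℝ (fun θ : Fin D → ℝ => θ a / 2) := by
      have := (hproj a).const_smul ((2:ℝ)⁻¹)
      simpa [Pi.smul_def, smul_eq_mul, div_eq_inv_mul, mul_comm] using this
    have hcos : Differentiable ℝ (fun θ : Fin D → ℝ => (Real.cos (θ a / 2) : ℂ)) :=
      Complex.ofRealCLM.differentiable.comp (Real.differentiable_cos.comp hhalf)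
    have hsin : Differentiable ℝ (fun θ : Fin D → ℝ => (Real.sin (θ a / 2) : ℂ)) :=
      Complex.ofRealCLM.differentiable.comp (Real.differentiable_sin.comp hhalf)
    exact (hcos.mul_const _).add ((hsin.const_mul (-Complex.I)).mul_const _)
  have hentry : ∀ (l : List (Fin D)) (i j : Fin (2 ^ N)),
      Differentiable ℝ (fun θ => ((l.map (g θ)).prod) i j) := by
    intro l
    induction l with
    | nil => intro i j; simp only [List.map_nil, List.prod_nil]; exact differentiable_const _
    | cons a l ih =>
      intro i j
      simp only [List.map_cons, List.prod_cons, Matrix.mul_apply]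
      exact Differentiable.fun_sum fun x _ => (hfac a i x).mul (ih x j)
  have hψdiff : ∀ i, Differentiable ℝ (fun θ => (U θ *ᵥ e₀) i) := by
    intro i
    have heq : (fun θ => (U θ *ᵥ e₀) i) = fun θ =>
        ∑ j, (((List.finRange D).reverse.map (g θ)).prod) i j * e₀ j := by
      funext θ
      rw [hU θ]
      rfl
    rw [heq]
    exact Differentiable.fun_sum fun j _ => (hentry _ i j).mul_const _
  have hFdiff : Differentiable ℝ (fun θ => star (U θ *ᵥ e₀) ⬝ᵥ (H *ᵥ (U θ *ᵥ e₀))) := by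
    have heq : (fun θ => star (U θ *ᵥ e₀) ⬝ᵥ (H *ᵥ (U θ *ᵥ e₀))) = fun θ =>
        ∑ i, (starRingEnd ℂ) ((U θ *ᵥ e₀) i) * ∑ j, H i j * (U θ *ᵥ e₀) j := by
      funext θ
      rfl
    rw [heq]
    exact Differentiable.fun_sum fun i _ =>
      ((Complex.conjCLE : ℂ ≃L[ℝ] ℂ).differentiable.comp (hψdiff i)).mul
        (Differentiable.fun_sum fun j _ => (hψdiff j).const_mul (H i j))
  have hCdiff : Differentiable ℝ C := by
    have heq : C = fun θ => (star (U θ *ᵥ e₀) ⬝ᵥ (H *ᵥ (U θ *ᵥ e₀))).re := by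
      funext θ
      rw [← hC θ, Complex.ofReal_re]
    rw [heq]
    exact Complex.reCLM.differentiable.comp hFdiff
  -- trigonometric slices
  have hslice : ∀ (k : Fin D) (θ : Fin D → ℝ), ∃ a b c : ℝ,
      ∀ t : ℝ, C (Function.update θ k t) = c + a * Real.cos t + b * Real.sin t := by
    intro k θ
    obtain ⟨l1, l2, hsplit⟩ :=
      List.append_of_mem (List.mem_reverse.mpr (List.mem_finRange k))
    have hnd : ((List.finRange D).reverse).Nodup := List.nodup_reverse.mpr (List.nodup_finRange D)
    rw [hsplit] at hnd
    have hk1 : k ∉ l1 := by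
      intro hk
      exact (List.disjoint_of_nodup_append hnd) hk List.mem_cons_self
    have hk2 : k ∉ l2 := by
      have := (List.Nodup.of_append_right hnd)
      exact fun hk => (List.nodup_cons.mp this).1 hk
    set L : Matrix (Fin (2 ^ N)) (Fin (2 ^ N)) ℂ := ((l1.map (g θ)).prod) with hL
    set R : Matrix (Fin (2 ^ N)) (Fin (2 ^ N)) ℂ := ((l2.map (g θ)).prod) with hR
    set u : Fin (2 ^ N) → ℂ := (L * (W k * R)) *ᵥ e₀ with hu
    set w : Fin (2 ^ N) → ℂ := (L * (V k * (W k * R))) *ᵥ e₀ with hw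
    have hmap : ∀ t : ℝ, ∀ l : List (Fin D), k ∉ l →
        l.map (g (Function.update θ k t)) = l.map (g θ) := by
      intro t l hkl
      refine List.map_congr_left fun j hj => ?_
      have hjk : j ≠ k := fun h => hkl (h ▸ hj)
      rw [hg]
      simp only [Function.update_apply, if_neg hjk]
    have hψt : ∀ t : ℝ, U (Function.update θ k t) *ᵥ e₀
        = (Real.cos (t / 2) : ℂ) • u + (-Complex.I * (Real.sin (t / 2) : ℂ)) • w := by
      intro t
      rw [hU, hsplit]
      show ((l1 ++ k :: l2).map (g (Function.update θ k t))).prod *ᵥ e₀ = _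
      rw [List.map_append, List.prod_append, List.map_cons, List.prod_cons,
        hmap t l1 hk1, hmap t l2 hk2]
      have hgk : g (Function.update θ k t) k
          = NormedSpace.exp ((-Complex.I * ((t : ℂ) / 2)) • V k) * W k := by
        rw [hg]; simp
      rw [hgk, matrix_exp_invo (V k) (hVinv k) t]
      rw [hu, hw, hL, hR]
      simp only [Matrix.add_mul, Matrix.mul_add, Matrix.smul_mul, Matrix.mul_smul, one_mul,
        Matrix.add_mulVec, Matrix.smul_mulVec, Matrix.mul_assoc]
    set A : ℂ := star u ⬝ᵥ (H *ᵥ u) with hA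
    set Bc : ℂ := star u ⬝ᵥ (H *ᵥ w) with hBc
    set B'c : ℂ := star w ⬝ᵥ (H *ᵥ u) with hB'c
    set Dc : ℂ := star w ⬝ᵥ (H *ᵥ w) with hDc
    have hCc : ∀ t : ℝ, (C (Function.update θ k t) : ℂ)
        = ((Real.cos (t / 2) ^ 2 : ℝ) : ℂ) * A + ((Real.sin (t / 2) ^ 2 : ℝ) : ℂ) * Dc
          + ((Real.cos (t / 2) * Real.sin (t / 2) : ℝ) : ℂ) * (Complex.I * (B'c - Bc)) := by
      intro t
      rw [hC, hψt t]
      rw [hA, hBc, hB'c, hDc]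
      simp only [star_add, star_smul, add_dotProduct, smul_dotProduct,
        dotProduct_add, dotProduct_smul, Matrix.mulVec_add, Matrix.mulVec_smul,
        smul_eq_mul]
      simp only [Complex.star_def, _root_.map_mul, map_neg, Complex.conj_I, Complex.conj_ofReal]
      push_cast
      linear_combination (-(Complex.sin ((t : ℂ) / 2)) ^ 2 * (star w ⬝ᵥ H *ᵥ w)) *
        Complex.I_sq
    refine ⟨(star u ⬝ᵥ (H *ᵥ u)).re / 2 - (star w ⬝ᵥ (H *ᵥ w)).re / 2,
      (Complex.I * (B'c - Bc)).re / 2,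
      (star u ⬝ᵥ (H *ᵥ u)).re / 2 + (star w ⬝ᵥ (H *ᵥ w)).re / 2, fun t => ?_⟩
    have hre := congrArg Complex.re (hCc t)
    rw [Complex.ofReal_re] at hre
    rw [hre]
    simp only [Complex.add_re, Complex.re_ofReal_mul]
    have hct : Real.cos t = 2 * Real.cos (t / 2) ^ 2 - 1 := by
      have h := Real.cos_two_mul (t / 2)
      rw [show 2 * (t / 2) = t by ring] at h
      linarith
    have hst : Real.sin t = 2 * Real.sin (t / 2) * Real.cos (t / 2) := by
      have h := Real.sin_two_mul (t / 2)
      rw [show 2 * (t / 2) = t by ring] at h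
      linarith
    rw [hct, hst, ← hA, ← hDc]
    have hpy := Real.sin_sq_add_cos_sq (t / 2)
    linear_combination Dc.re * hpy
  have hNice : Nice (‖Matrix.toEuclideanCLM (𝕜 := ℂ) H‖) C := ⟨hbound, hCdiff, hslice⟩
  exact (nice_foldr hNice _).1 θ
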